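/- Let G and H be word-representable graphs, H rooted at a vertex, with |V(H)| = n and |V(G)| = m. Then l(G ∘ H) ≤ n·l(G) + m·l(H) + (n−1)·κ_G, where l is the minimum word-representant length and κ_G is the maximum clique size of G. -/

import Mathlib

open SimpleGraph

variable {V : Type*}

/-- Two distinct letters `x` and `y` alternate in a word `w` if the subsequence of `w`
consisting of all occurrences of `x` and `y` is strictly alternating. -/
def Alternates [DecidableEq V] (x y : V) (w : List V) : Prop :=
  (w.filter (fun z => decide (z = x ∨ z = y))).Chain' (· ≠ ·)

/-- A word `w` represents the graph `G` if it contains every vertex at least once and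
two distinct vertices are adjacent iff they alternate in `w`. -/
def Represents [DecidableEq V] (G : SimpleGraph V) (w : List V) : Prop :=
  (∀ v : V, v ∈ w) ∧ ∀ x y : V, x ≠ y → (G.Adj x y ↔ Alternates x y w)

/-- A graph is word-representable if some word represents it. -/
def WordRepresentable [DecidableEq V] (G : SimpleGraph V) : Prop :=
  ∃ w : List V, Represents G w

/-- `l(G)`: the minimum length of a word-representant of `G`. -/
noncomputable def reprLen [DecidableEq V] (G : SimpleGraph V) : ℕ :=
  sInf {n | ∃ w : List V, Represents G w ∧ w.length = n}

/-- The rooted product `G ∘ H` with root `r : U`: copies of `H` indexed by `V(G)`,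
with each vertex `u` of `G` identified with the root of the `u`-th copy. -/
def rootedProd {U : Type*} (G : SimpleGraph V) (H : SimpleGraph U) (r : U) :
    SimpleGraph (V × U) where
  Adj p q := (p.1 = q.1 ∧ H.Adj p.2 q.2) ∨ (p.2 = r ∧ q.2 = r ∧ G.Adj p.1 q.1)
  symm := by
    refine ⟨?_⟩
    intro p q h
    rcases h with ⟨h1, h2⟩ | ⟨h1, h2, h3⟩
    · exact Or.inl ⟨h1.symm, h2.symm⟩
    · exact Or.inr ⟨h2, h1, h3.symm⟩
  loopless := by
    refine ⟨?_⟩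
    intro p h
    rcases h with ⟨_, h2⟩ | ⟨_, _, h3⟩
    · exact h2.ne rfl
    · exact h3.ne rfl



open List

namespace Stmt19

section Helpers
variable {α : Type*} [DecidableEq α]
set_option linter.unusedSectionVars false

lemma filter_dedup (p : α → Bool) (l : List α) : l.dedup.filter p = (l.filter p).dedup := by
  induction l with
  | nil => simp
  | cons a l ih =>
    by_cases ha : a ∈ l
    · rw [List.dedup_cons_of_mem ha, ih, List.filter_cons]
      split
      · rename_i hpa
        rw [List.dedup_cons_of_mem]
        exact List.mem_filter.2 ⟨ha, hpa⟩
      · rfl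
    · rw [List.dedup_cons_of_notMem ha, List.filter_cons, List.filter_cons]
      split
      · rw [List.dedup_cons_of_notMem]
        · rw [ih]
        · intro hmem
          exact ha (List.mem_of_mem_filter hmem)
      · exact ih

lemma dedup_getLast? (l : List α) : l.dedup.getLast? = l.getLast? := by
  induction l with
  | nil => simp
  | cons a l ih =>
    by_cases ha : a ∈ l
    · rw [List.dedup_cons_of_mem ha, ih]
      have hne : l ≠ [] := List.ne_nil_of_mem ha
      cases l with
      | nil => simp at hne
      | cons b m => rw [List.getLast?_cons_cons]
    · rw [List.dedup_cons_of_notMem ha]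
      cases hl : l.dedup with
      | nil =>
        have : l = [] := by
          cases l with
          | nil => rfl
          | cons b m =>
            exfalso
            have : b ∈ (b :: m).dedup := List.mem_dedup.2 (List.mem_cons_self)
            rw [hl] at this; simp at this
        subst this; simp
      | cons c m =>
        have hlne : l ≠ [] := by
          intro h; subst h; simp at hl
        cases l with
        | nil => simp at hlne
        | cons b mm =>
          rw [List.getLast?_cons_cons, ← hl, ih, List.getLast?_cons_cons]

/-- A nodup list over two distinct elements containing both is `[a,b]` or `[b,a]`. -/
lemma pair_list {a b : α} (hab : a ≠ b) :
    ∀ (d : List α), d.Nodup → a ∈ d → b ∈ d → (∀ x ∈ d, x = a ∨ x = b) →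
      d = [a, b] ∨ d = [b, a] := by
  intro d
  match d with
  | [] => intro _ ha; simp at ha
  | [x] =>
    intro _ ha hb _
    simp at ha hb; subst ha; subst hb; exact absurd rfl hab
  | x :: y :: rest =>
    intro hn ha hb hsub
    have hx := hsub x (by simp)
    have hy := hsub y (by simp [List.mem_cons])
    have hxy : x ≠ y := by
      intro h; subst h
      exact (List.nodup_cons.1 hn).1 (by simp)
    have hrest : rest = [] := by
      cases rest with
      | nil => rfl
      | cons z zs =>
        exfalso
        have hz := hsub z (by simp)
        have hn1 := List.nodup_cons.1 hn
        have hn2 := List.nodup_cons.1 hn1.2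
        have hzx : z ≠ x := by intro h; exact hn1.1 (h ▸ (by simp : z ∈ y :: z :: zs))
        have hzy : z ≠ y := by intro h; exact hn2.1 (h ▸ (by simp : z ∈ z :: zs))
        rcases hz with h | h <;> rcases hx with h' | h' <;> rcases hy with h'' | h'' <;>
          first
          | exact hzx (h.trans h'.symm)
          | exact hzy (h.trans h''.symm)
          | exact hab (h'.symm.trans h'')
          | exact hab (h''.symm.trans h')
          | exact hxy (h'.trans h''.symm)
    subst hrest
    rcases hx with h | h <;> rcases hy with h' | h'
    · exact absurd (h.trans h'.symm) hxy
    · left; rw [h, h']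
    · right; rw [h, h']
    · exact absurd (h.trans h'.symm) hxy

/-- For a nonempty list `s` with elements in `{a,b}`, containing both:
`s.dedup = [o, g]` where `g` is the last element of `s`. -/
lemma dedup_pair {a b : α} {s : List α} (hab : a ≠ b) (ha : a ∈ s) (hb : b ∈ s)
    (hsub : ∀ x ∈ s, x = a ∨ x = b) :
    ∃ o g, o ≠ g ∧ (o = a ∨ o = b) ∧ (g = a ∨ g = b) ∧ s.dedup = [o, g] ∧
      s.getLast? = some g := by
  have hd := pair_list hab s.dedup (List.nodup_dedup s) (List.mem_dedup.2 ha)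
    (List.mem_dedup.2 hb) (fun x hx => hsub x (List.mem_dedup.1 hx))
  rcases hd with h | h
  · exact ⟨a, b, hab, Or.inl rfl, Or.inr rfl, h, by
      rw [← dedup_getLast? s, h]; rfl⟩
  · exact ⟨b, a, hab.symm, Or.inr rfl, Or.inl rfl, h, by
      rw [← dedup_getLast? s, h]; rfl⟩

lemma chain'_append_pair {s : List α} {o g : α} (h : s.getLast? = some g) (hog : o ≠ g) :
    (s ++ [o, g]).Chain' (· ≠ ·) ↔ s.Chain' (· ≠ ·) := by
  unfold List.Chain'
  rw [List.isChain_append]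
  simp only [h]
  constructor
  · exact fun h' => h'.1
  · intro hs
    refine ⟨hs, ?_, ?_⟩
    · simp [List.isChain_cons_cons, hog]
    · intro x hx y hy
      simp at hx hy
      subst hx; subst hy
      exact fun hh => hog hh.symm

lemma chain'_append_single {s : List α} {o g : α} (h : s.getLast? = some g) (hog : o ≠ g) :
    (s ++ [o]).Chain' (· ≠ ·) ↔ s.Chain' (· ≠ ·) := by
  unfold List.Chain'
  rw [List.isChain_append]
  simp only [h]
  constructor
  · exact fun h' => h'.1
  · intro hs
    refine ⟨hs, by simp, ?_⟩
    intro x hx y hy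
    simp at hx hy
    subst hx; subst hy
    exact fun hh => hog hh.symm

lemma chain'_pair_prepend {s : List α} {hh o : α} (h : s.head? = some hh) (ho : o ≠ hh) :
    (hh :: o :: s).Chain' (· ≠ ·) ↔ s.Chain' (· ≠ ·) := by
  have : hh :: o :: s = [hh, o] ++ s := rfl
  unfold List.Chain'
  rw [this, List.isChain_append]
  constructor
  · exact fun h' => h'.2.1
  · intro hs
    refine ⟨by simp [List.isChain_cons_cons]; exact fun hhh => ho hhh.symm, hs, ?_⟩
    intro x hx y hy
    simp at hx
    subst hx
    rw [h] at hy; simp at hy; subst hy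
    exact ho

end Helpers

end Stmt19


namespace Stmt19

open List

section RepLemmas
variable {α : Type*} [DecidableEq α]
set_option linter.unusedSectionVars false

/-- The filtered word for a pair. -/
lemma pair_facts {Γ : SimpleGraph α} {w : List α} (hw : Represents Γ w)
    {a b : α} (hab : a ≠ b) :
    ∃ o g, o ≠ g ∧ (o = a ∨ o = b) ∧ (g = a ∨ g = b) ∧
      (w.filter (fun z => decide (z = a ∨ z = b))).dedup = [o, g] ∧
      (w.filter (fun z => decide (z = a ∨ z = b))).getLast? = some g := by
  set p : α → Bool := fun z => decide (z = a ∨ z = b) with hp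
  have ha : a ∈ w.filter p := List.mem_filter.2 ⟨hw.1 a, by simp [hp]⟩
  have hb : b ∈ w.filter p := List.mem_filter.2 ⟨hw.1 b, by simp [hp]⟩
  have hsub : ∀ x ∈ w.filter p, x = a ∨ x = b := by
    intro x hx
    have := (List.mem_filter.1 hx).2
    simpa [hp] using this
  exact dedup_pair hab ha hb hsub

/-- Appending the dedup (letters sorted by last occurrence) preserves representation. -/
lemma represents_append_dedup {Γ : SimpleGraph α} {w : List α} (hw : Represents Γ w) :
    Represents Γ (w ++ w.dedup) := by
  constructor
  · intro v; exact List.mem_append.2 (Or.inl (hw.1 v))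
  · intro x y hxy
    rw [hw.2 x y hxy]
    unfold Alternates
    rw [List.filter_append, filter_dedup]
    obtain ⟨o, g, hog, _, _, hde, hgl⟩ := pair_facts hw hxy
    rw [hde]
    exact (chain'_append_pair hgl hog).symm

/-- Appending any prefix of the dedup preserves representation. -/
lemma represents_append_prefix_dedup {Γ : SimpleGraph α} {w : List α} (hw : Represents Γ w)
    {l l' : List α} (hl : w.dedup = l ++ l') :
    Represents Γ (w ++ l) := by
  constructor
  · intro v; exact List.mem_append.2 (Or.inl (hw.1 v))
  · intro x y hxy
    rw [hw.2 x y hxy]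
    unfold Alternates
    rw [List.filter_append]
    obtain ⟨o, g, hog, _, _, hde, hgl⟩ := pair_facts hw hxy
    rw [← filter_dedup, hl, List.filter_append] at hde
    set p : α → Bool := fun z => decide (z = x ∨ z = y) with hp
    -- l.filter p is a prefix of [o, g]
    have hpre : l.filter p ++ l'.filter p = [o, g] := hde
    rcases (List.append_eq_cons_iff.1 hpre) with ⟨h1, _⟩ | ⟨as, h1, h2⟩
    · -- filter l = []
      rw [h1, List.append_nil]
    · -- filter l = o :: as, as ++ filter l' = [g]
      rcases (List.append_eq_cons_iff.1 h2.symm) with ⟨h3, _⟩ | ⟨bs, h3, h4⟩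
      · -- as = [], filter l = [o]
        rw [h1, h3]
        exact (chain'_append_single hgl hog).symm
      · -- as = g :: bs, bs ++ _ = [] so bs = []
        have hbs : bs = [] := by
          cases bs with
          | nil => rfl
          | cons c cs => exfalso; simp at h4
        subst hbs
        rw [h1, h3]
        exact (chain'_append_pair hgl hog).symm

/-- Prepending the initial permutation (letters in order of first occurrence)
preserves representation. -/
lemma represents_prepend_dedup {Γ : SimpleGraph α} {w : List α} (hw : Represents Γ w) :
    Represents Γ (w.reverse.dedup.reverse ++ w) := by
  constructor
  · intro v; exact List.mem_append.2 (Or.inr (hw.1 v))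
  · intro x y hxy
    rw [hw.2 x y hxy]
    unfold Alternates
    rw [List.filter_append, List.filter_reverse, filter_dedup, List.filter_reverse]
    set p : α → Bool := fun z => decide (z = x ∨ z = y) with hp
    set s : List α := w.filter p with hs
    have ha : x ∈ s := List.mem_filter.2 ⟨hw.1 x, by simp [hp]⟩
    have hb : y ∈ s := List.mem_filter.2 ⟨hw.1 y, by simp [hp]⟩
    have hsub : ∀ z ∈ s.reverse, z = x ∨ z = y := by
      intro z hz
      have := (List.mem_filter.1 (List.mem_reverse.1 hz)).2
      simpa [hp] using this
    obtain ⟨o, g, hog, _, _, hde, hgl⟩ :=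
      dedup_pair hxy (List.mem_reverse.2 ha) (List.mem_reverse.2 hb) hsub
    rw [hde]
    have hhd : s.head? = some g := by
      rw [← List.getLast?_reverse]; exact hgl
    have h2 : ([o, g] : List α).reverse ++ s = g :: o :: s := by simp
    rw [h2]
    exact (chain'_pair_prepend hhd hog).symm

end RepLemmas

end Stmt19


namespace Stmt19

open List

section Split
variable {β : Type*} [DecidableEq β]
set_option linter.unusedSectionVars false

/-- Split a word into pieces, cutting after each occurrence of `r`.
Result: `[B₀++[r], B₁++[r], ..., B_{t-1}++[r], B_t]`. -/
def splitR (r : β) : List β → List (List β)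
  | [] => [[]]
  | a :: w =>
    if a = r then [a] :: splitR r w
    else ((a :: (splitR r w).headI) :: (splitR r w).tail)

lemma splitR_ne_nil (r : β) (w : List β) : splitR r w ≠ [] := by
  cases w with
  | nil => simp [splitR]
  | cons a w => simp only [splitR]; split <;> simp

lemma getLast?_cons_ne {l : List β} (h : l ≠ []) (a : β) :
    (a :: l).getLast? = l.getLast? := by
  cases l with
  | nil => exact absurd rfl h
  | cons b m => exact List.getLast?_cons_cons

lemma flatten_splitR (r : β) (w : List β) : (splitR r w).flatten = w := by
  induction w with
  | nil => simp [splitR]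
  | cons a w ih =>
    simp only [splitR]
    split
    · rename_i ha; subst ha; simp [ih]
    · cases hsp : splitR r w with
      | nil => exact absurd hsp (splitR_ne_nil r w)
      | cons h tl =>
        rw [hsp] at ih
        simp only [hsp, List.headI_cons, List.tail_cons, List.flatten_cons, List.cons_append]
        rw [← List.flatten_cons, ih]

lemma length_splitR (r : β) (w : List β) : (splitR r w).length = w.count r + 1 := by
  induction w with
  | nil => simp [splitR]
  | cons a w ih =>
    simp only [splitR]
    split
    · rename_i ha; subst ha
      simp [List.count_cons, ih]
    · rename_i ha
      cases hsp : splitR r w with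
      | nil => exact absurd hsp (splitR_ne_nil r w)
      | cons h tl =>
        rw [hsp] at ih
        simp only [hsp, List.headI_cons, List.tail_cons, List.length_cons] at ih ⊢
        rw [List.count_cons]
        simp [ha, ih]

lemma splitR_no_r (r : β) (w : List β) (h : r ∉ w) : splitR r w = [w] := by
  induction w with
  | nil => rfl
  | cons a w ih =>
    have ha : a ≠ r := fun hh => h (hh ▸ List.mem_cons_self)
    have hw : r ∉ w := fun hh => h (List.mem_cons_of_mem a hh)
    simp only [splitR, if_neg ha, ih hw]
    rfl

/-- Every piece except the last contains `r` exactly once. -/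
lemma count_splitR_dropLast (r : β) (w : List β) :
    ∀ P ∈ (splitR r w).dropLast, P.count r = 1 := by
  induction w with
  | nil => simp [splitR]
  | cons a w ih =>
    simp only [splitR]
    split
    · rename_i ha; subst ha
      intro P hP
      cases hsp : splitR a w with
      | nil => exact absurd hsp (splitR_ne_nil a w)
      | cons h tl =>
        rw [hsp] at hP
        rw [List.dropLast_cons_of_ne_nil (by simp : (h :: tl) ≠ [])] at hP
        rcases List.mem_cons.1 hP with h1 | h1
        · subst h1; simp
        · exact ih P (hsp ▸ h1)
    · rename_i ha
      intro P hP
      cases hsp : splitR r w with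
      | nil => exact absurd hsp (splitR_ne_nil r w)
      | cons h tl =>
        rw [hsp] at hP
        simp only [List.headI_cons, List.tail_cons] at hP
        cases tl with
        | nil => simp at hP
        | cons h2 tl2 =>
          rw [List.dropLast_cons_of_ne_nil (by simp : (h2 :: tl2) ≠ [])] at hP
          rcases List.mem_cons.1 hP with h1 | h1
          · subst h1
            rw [List.count_cons]
            have := ih h (by rw [hsp]; rw [List.dropLast_cons_of_ne_nil (by simp : (h2 :: tl2) ≠ [])]; exact List.mem_cons_self)
            simp [ha, this]
          · exact ih P (by rw [hsp]; rw [List.dropLast_cons_of_ne_nil (by simp : (h2 :: tl2) ≠ [])]; exact List.mem_cons_of_mem _ h1)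

/-- The last piece contains no `r`. -/
lemma count_splitR_getLast (r : β) (w : List β) :
    ((splitR r w).getLast?.getD []).count r = 0 := by
  induction w with
  | nil => simp [splitR]
  | cons a w ih =>
    simp only [splitR]
    split
    · cases hsp : splitR r w with
      | nil => exact absurd hsp (splitR_ne_nil r w)
      | cons h tl =>
        rw [hsp] at ih
        rw [getLast?_cons_ne (by simp : (h :: tl) ≠ [])]
        exact ih
    · rename_i ha
      cases hsp : splitR r w with
      | nil => exact absurd hsp (splitR_ne_nil r w)
      | cons h tl =>
        rw [hsp] at ih
        simp only [List.headI_cons, List.tail_cons]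
        cases tl with
        | nil =>
          simp only [List.getLast?_singleton, Option.getD_some] at ih ⊢
          rw [List.count_cons]
          simp [ha, ih]
        | cons h2 tl2 =>
          rw [getLast?_cons_ne (by simp : (h2 :: tl2) ≠ [])]
          rw [getLast?_cons_ne (by simp : (h2 :: tl2) ≠ [])] at ih
          exact ih

/-- Letters occurring after `r` in the dedup (i.e. letters whose last occurrence is
after `r`'s last occurrence) belong to the final piece. -/
lemma qpost_subset_getLast (r : β) (w : List β) (hr : r ∈ w) :
    ∀ u ∈ (w.dedup.dropWhile (· ≠ r)).tail, u ∈ (splitR r w).getLast?.getD [] := by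
  induction w with
  | nil => simp at hr
  | cons a w ih =>
    by_cases ha : a = r
    · subst ha
      by_cases hmem : a ∈ w
      · intro u hu
        rw [List.dedup_cons_of_mem hmem] at hu
        have := ih hmem u hu
        have hspl : splitR a (a :: w) = [a] :: splitR a w := by
          simp [splitR]
        rw [hspl]
        cases hsp : splitR a w with
        | nil => exact absurd hsp (splitR_ne_nil a w)
        | cons h tl =>
          rw [getLast?_cons_ne (by simp : (h :: tl) ≠ [])]
          rw [hsp] at this
          exact this
      · intro u hu
        rw [List.dedup_cons_of_notMem hmem, List.dropWhile_cons, if_neg (by simp)] at hu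
        simp only [List.tail_cons] at hu
        have huw : u ∈ w := List.mem_dedup.1 hu
        have hspl : splitR a (a :: w) = [a] :: splitR a w := by
          simp [splitR]
        rw [hspl, splitR_no_r a w hmem]
        simpa using huw
    · have hrw : r ∈ w := by
        rcases List.mem_cons.1 hr with h | h
        · exact absurd h.symm ha
        · exact h
      intro u hu
      have key : u ∈ (w.dedup.dropWhile (· ≠ r)).tail := by
        by_cases hmem : a ∈ w
        · rwa [List.dedup_cons_of_mem hmem] at hu
        · rw [List.dedup_cons_of_notMem hmem, List.dropWhile_cons,
            if_pos (by simp [ha])] at hu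
          exact hu
      have := ih hrw u key
      simp only [splitR, if_neg ha]
      cases hsp : splitR r w with
      | nil => exact absurd hsp (splitR_ne_nil r w)
      | cons h tl =>
        rw [hsp] at this
        simp only [List.headI_cons, List.tail_cons]
        have htl : tl ≠ [] := by
          have hlen := length_splitR r w
          rw [hsp] at hlen
          simp only [List.length_cons] at hlen
          have : 1 ≤ w.count r := List.one_le_count_iff.2 hrw
          intro hh; subst hh; simp at hlen; omega
        rw [getLast?_cons_ne htl]
        rwa [getLast?_cons_ne htl] at this

end Split

end Stmt19


namespace Stmt19

open List

section Construction
variable {V : Type*} {U : Type*} [DecidableEq V] [DecidableEq U]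
set_option linter.unusedSectionVars false

/-- letters before `r` in the dedup of `wH` (letters whose last occurrence precedes `r`'s). -/
def qpre (r : U) (wH : List U) : List U := wH.dedup.takeWhile (fun u => decide (u ≠ r))
/-- letters after `r` in the dedup of `wH`. -/
def qpost (r : U) (wH : List U) : List U := (wH.dedup.dropWhile (fun u => decide (u ≠ r))).tail
/-- the part of `wH` after the last `r`. -/
def btl (r : U) (wH : List U) : List U := (splitR r wH).getLast?.getD []

def bigP (r : U) (wH : List U) : List U :=
  btl r wH ++ qpre r wH ++ [r] ++ qpost r wH ++ qpre r wH
def midP (r : U) (wH : List U) : List U := [r] ++ qpost r wH ++ qpre r wH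
def endP (r : U) (wH : List U) : List U := [r] ++ qpost r wH

def gpieces (r : U) (wH : List U) (c : ℕ) : List (List U) :=
  if c ≤ 1 then [bigP r wH]
  else bigP r wH :: (List.replicate (c - 2) (midP r wH) ++ [endP r wH])

def emitG (r : U) (wH : List U) (cv : V → ℕ) : List V → (V → ℕ) → List (V × U)
  | [], _ => []
  | v :: l, f =>
    ((gpieces r wH (cv v)).getD (f v) []).map (Prod.mk v)
      ++ emitG r wH cv l (fun w => if w = v then f v + 1 else f w)

def rowsW (r : U) (wH : List U) (pi : List V) : List (V × U) :=
  ((splitR r wH).dropLast.map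
    (fun P => (pi.map (fun v => P.map (Prod.mk v))).flatten)).flatten

def bigW (r : U) (wG : List V) (wH : List U) : List (V × U) :=
  rowsW r wH (wG.reverse.dedup.reverse) ++ emitG r wH (fun v => wG.count v) wG (fun _ => 0)

/- ------------ basic decomposition facts ------------- -/

lemma dropWhile_ne_cons {l : List U} {r : U} (hr : r ∈ l) :
    l.dropWhile (fun u => decide (u ≠ r)) = r :: (l.dropWhile (fun u => decide (u ≠ r))).tail := by
  induction l with
  | nil => simp at hr
  | cons a l ih =>
    by_cases ha : a = r
    · subst ha
      rw [List.dropWhile_cons, if_neg (by simp)]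
      simp
    · rcases List.mem_cons.1 hr with h | h
      · exact absurd h.symm ha
      · rw [List.dropWhile_cons, if_pos (by simp [ha])]
        exact ih h

lemma q_decomp {r : U} {wH : List U} (hr : r ∈ wH) :
    wH.dedup = qpre r wH ++ r :: qpost r wH := by
  have h1 := List.takeWhile_append_dropWhile (p := fun u => decide (u ≠ r)) (l := wH.dedup)
  have h2 := dropWhile_ne_cons (l := wH.dedup) (r := r) (List.mem_dedup.2 hr)
  rw [← h1, h2]
  rfl

lemma r_not_mem_qpre (r : U) (wH : List U) : r ∉ qpre r wH := by
  intro h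
  have := List.mem_takeWhile_imp h
  simp at this

lemma r_not_mem_qpost {r : U} {wH : List U} (hr : r ∈ wH) : r ∉ qpost r wH := by
  intro h
  have hnd := List.nodup_dedup wH
  rw [q_decomp hr] at hnd
  have := (List.nodup_append.1 hnd).2.1
  exact (List.nodup_cons.1 this).1 h

lemma count_r_qpre (r : U) (wH : List U) : (qpre r wH).count r = 0 :=
  List.count_eq_zero.2 (r_not_mem_qpre r wH)

lemma count_r_qpost {r : U} {wH : List U} (hr : r ∈ wH) : (qpost r wH).count r = 0 :=
  List.count_eq_zero.2 (r_not_mem_qpost hr)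

lemma count_r_btl (r : U) (wH : List U) : (btl r wH).count r = 0 :=
  count_splitR_getLast r wH

lemma count_r_bigP {r : U} {wH : List U} (hr : r ∈ wH) : (bigP r wH).count r = 1 := by
  unfold bigP
  simp [List.count_append, count_r_qpre, count_r_qpost hr, count_r_btl]

lemma count_r_midP {r : U} {wH : List U} (hr : r ∈ wH) : (midP r wH).count r = 1 := by
  unfold midP
  simp [List.count_append, count_r_qpre, count_r_qpost hr]

lemma count_r_endP {r : U} {wH : List U} (hr : r ∈ wH) : (endP r wH).count r = 1 := by
  unfold endP
  simp [List.count_append, count_r_qpost hr]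

lemma count_r_gpieces {r : U} {wH : List U} (hr : r ∈ wH) (c : ℕ) :
    ∀ P ∈ gpieces r wH c, P.count r = 1 := by
  intro P hP
  unfold gpieces at hP
  split at hP
  · simp at hP; subst hP; exact count_r_bigP hr
  · rcases List.mem_cons.1 hP with h | h
    · subst h; exact count_r_bigP hr
    · rcases List.mem_append.1 h with h' | h'
      · rw [List.eq_of_mem_replicate h']
        exact count_r_midP hr
      · simp at h'; subst h'; exact count_r_endP hr

lemma gpieces_getD_zero (r : U) (wH : List U) (c : ℕ) :
    (gpieces r wH c).getD 0 [] = bigP r wH := by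
  unfold gpieces
  split <;> rfl

lemma length_gpieces (r : U) (wH : List U) {c : ℕ} (hc : 1 ≤ c) :
    (gpieces r wH c).length = c := by
  unfold gpieces
  split
  · rename_i h; simp; omega
  · rename_i h; simp; omega

/-- flatten of gpieces: the per-copy tail material. -/
lemma flatten_gpieces_one (r : U) (wH : List U) :
    (gpieces r wH 1).flatten = btl r wH ++ (qpre r wH ++ [r] ++ qpost r wH) ++ qpre r wH := by
  unfold gpieces bigP
  simp

lemma flatten_mid_end (r : U) (wH : List U) :
    ∀ k : ℕ, qpre r wH ++ (List.replicate k (midP r wH) ++ [endP r wH]).flatten =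
      (List.replicate (k + 1) (qpre r wH ++ [r] ++ qpost r wH)).flatten := by
  intro k
  induction k with
  | zero =>
    unfold midP endP
    simp
  | succ k ih =>
    have hqm : qpre r wH ++ midP r wH
        = (qpre r wH ++ [r] ++ qpost r wH) ++ qpre r wH := by
      unfold midP; simp [List.append_assoc]
    calc qpre r wH ++ (List.replicate (k+1) (midP r wH) ++ [endP r wH]).flatten
        = (qpre r wH ++ midP r wH) ++
            (List.replicate k (midP r wH) ++ [endP r wH]).flatten := by
          rw [List.replicate_succ, List.cons_append, List.flatten_cons, List.append_assoc]
      _ = (qpre r wH ++ [r] ++ qpost r wH) ++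
            (qpre r wH ++ (List.replicate k (midP r wH) ++ [endP r wH]).flatten) := by
          rw [hqm, List.append_assoc]
      _ = (qpre r wH ++ [r] ++ qpost r wH) ++
            (List.replicate (k+1) (qpre r wH ++ [r] ++ qpost r wH)).flatten := by rw [ih]
      _ = (List.replicate (k+1+1) (qpre r wH ++ [r] ++ qpost r wH)).flatten := by
          rw [List.replicate_succ (n := k+1), List.flatten_cons]

lemma flatten_gpieces_ge2 (r : U) (wH : List U) {c : ℕ} (hc : 2 ≤ c) :
    (gpieces r wH c).flatten =
      btl r wH ++ (List.replicate c (qpre r wH ++ [r] ++ qpost r wH)).flatten := by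
  unfold gpieces
  rw [if_neg (by omega)]
  rw [List.flatten_cons]
  have h2 := flatten_mid_end r wH (c - 2)
  have h3 : c - 2 + 1 = c - 1 := by omega
  rw [h3] at h2
  have h4 : bigP r wH ++ (List.replicate (c - 2) (midP r wH) ++ [endP r wH]).flatten
      = btl r wH ++ (qpre r wH ++ [r] ++ qpost r wH) ++
        (qpre r wH ++ (List.replicate (c - 2) (midP r wH) ++ [endP r wH]).flatten) := by
    unfold bigP
    simp [List.append_assoc]
  rw [h4, h2]
  have h5 : c = 1 + (c - 1) := by omega
  conv_rhs => rw [h5]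
  rw [List.replicate_add, List.flatten_append]
  simp [List.append_assoc]

/- ------------ generic flatten helpers ------------- -/

lemma flatten_map_single {γ : Type*} {δ : Type*} [DecidableEq γ] {l : List γ} {v : γ}
    (hn : l.Nodup) (hv : v ∈ l) (g : γ → List δ)
    (hz : ∀ w ∈ l, w ≠ v → g w = []) : (l.map g).flatten = g v := by
  induction l with
  | nil => simp at hv
  | cons a l ih =>
    rcases List.mem_cons.1 hv with h | h
    · subst h
      simp only [List.map_cons, List.flatten_cons]
      have : (l.map g).flatten = [] := by
        apply List.flatten_eq_nil_iff.2
        intro x hx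
        rcases List.mem_map.1 hx with ⟨w, hw, hwx⟩
        rw [← hwx]
        exact hz w (List.mem_cons_of_mem _ hw) (fun hh => (List.nodup_cons.1 hn).1 (hh ▸ hw))
      rw [this, List.append_nil]
    · have ha : a ≠ v := fun hh => (List.nodup_cons.1 hn).1 (hh ▸ h)
      simp only [List.map_cons, List.flatten_cons]
      rw [hz a (List.mem_cons_self) ha, List.nil_append]
      exact ih (List.nodup_cons.1 hn).2 h (fun w hw hwv => hz w (List.mem_cons_of_mem a hw) hwv)

lemma flatten_map_ite {γ : Type*} {δ : Type*} {l : List γ}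
    (g : γ → List δ) (sel : γ → Bool) (h : γ → δ)
    (hg : ∀ w ∈ l, g w = if sel w then [h w] else []) :
    (l.map g).flatten = (l.filter sel).map h := by
  induction l with
  | nil => simp
  | cons a l ih =>
    simp only [List.map_cons, List.flatten_cons, List.filter_cons]
    rw [hg a (List.mem_cons_self)]
    rw [ih (fun w hw => hg w (List.mem_cons_of_mem a hw))]
    by_cases hs : sel a
    · rw [if_pos hs, if_pos hs]; rfl
    · rw [if_neg hs, if_neg hs]; rfl

lemma getD_range_map {γ : Type*} (L : List γ) (d : γ) :
    (List.range L.length).map (fun i => L.getD i d) = L := by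
  induction L with
  | nil => simp
  | cons a L ih =>
    rw [List.length_cons, List.range_succ_eq_map]
    simp only [List.map_cons, List.getD_cons_zero, List.map_map]
    congr 1

end Construction

end Stmt19


namespace Stmt19

open List

section Emission
variable {V : Type*} {U : Type*} [DecidableEq V] [DecidableEq U]
variable (r : U) (wH : List U) (cv : V → ℕ)
set_option linter.unusedSectionVars false

lemma filter_emitG_copy (p : V × U → Bool) (v : V)
    (hp : ∀ w, w ≠ v → ∀ u, p (w, u) = false) :
    ∀ (l : List V) (f : V → ℕ),
      (emitG r wH cv l f).filter p =
        ((List.range (l.count v)).map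
          (fun i => (((gpieces r wH (cv v)).getD (f v + i) []).filter
            (fun u => p (v, u))).map (Prod.mk v))).flatten := by
  intro l
  induction l with
  | nil => intro f; simp [emitG]
  | cons w l ih =>
    intro f
    simp only [emitG, List.filter_append]
    by_cases hwv : w = v
    · subst hwv
      rw [List.count_cons_self, List.range_succ_eq_map]
      simp only [List.map_cons, List.flatten_cons, Nat.add_zero]
      congr 1
      · rw [List.filter_map]
        rfl
      · rw [ih]
        simp only [if_pos rfl, if_true, List.map_map]
        congr 1
        apply List.map_congr_left
        intro i _
        simp only [Function.comp]
        have h : f w + (i + 1) = f w + 1 + i := by omega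
        rw [show Nat.succ i = i + 1 from rfl, h]
    · rw [List.filter_map]
      have hz : (fun u => p (w, u)) = (fun _ => false) := by
        funext u; exact hp w hwv u
      have : List.filter (p ∘ Prod.mk w) ((gpieces r wH (cv w)).getD (f w) []) = [] := by
        have : (p ∘ Prod.mk w) = fun _ => false := by funext u; exact hp w hwv u
        rw [this, List.filter_false]
      rw [this]
      simp only [List.map_nil, List.nil_append]
      rw [ih]
      rw [List.count_cons_of_ne hwv]
      congr 1
      apply List.map_congr_left
      intro i _
      rw [show (if v = w then f w + 1 else f v) = f v from by rw [if_neg (fun h => hwv h.symm)]]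

lemma filter_emitG_root (p : V × U → Bool) (sel : V → Bool)
    (hp : ∀ w u, p (w, u) = (sel w && decide (u = r))) (hr : r ∈ wH) :
    ∀ (l : List V) (f : V → ℕ), (∀ w ∈ l, f w + l.count w ≤ cv w) →
      (emitG r wH cv l f).filter p = (l.filter sel).map (fun v => (v, r)) := by
  intro l
  induction l with
  | nil => intro f _; simp [emitG]
  | cons w l ih =>
    intro f hinv
    simp only [emitG, List.filter_append]
    have hcw : f w < cv w := by
      have := hinv w (List.mem_cons_self)
      rw [List.count_cons_self] at this
      omega
    have hlen : f w < (gpieces r wH (cv w)).length := by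
      rw [length_gpieces r wH (by omega : 1 ≤ cv w)]
      exact hcw
    have hmem : (gpieces r wH (cv w)).getD (f w) [] ∈ gpieces r wH (cv w) := by
      rw [List.getD_eq_getElem _ _ hlen]
      exact List.getElem_mem hlen
    have hcount : ((gpieces r wH (cv w)).getD (f w) []).count r = 1 :=
      count_r_gpieces hr (cv w) _ hmem
    have hstep : (emitG r wH cv l fun w' => if w' = w then f w + 1 else f w').filter p
        = (l.filter sel).map (fun v => (v, r)) := by
      apply ih
      intro w' hw'
      by_cases hww : w' = w
      · subst hww
        have := hinv w' (List.mem_cons_self)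
        rw [List.count_cons_self] at this
        simp only [if_pos rfl, if_true]
        omega
      · have := hinv w' (List.mem_cons_of_mem w hw')
        rw [List.count_cons_of_ne (Ne.symm hww)] at this
        simp only [if_neg hww]
        omega
    rw [hstep, List.filter_map, List.filter_cons]
    by_cases hsel : sel w
    · have hf : (p ∘ Prod.mk w) = fun u => decide (u = r) := by
        funext u
        simp [hp w u, hsel]
      rw [hf, List.filter_eq, hcount]
      simp [hsel]
    · have hf : (p ∘ Prod.mk w) = fun _ => false := by
        funext u
        simp [hp w u]
        intro h; exact absurd h hsel
      rw [hf, List.filter_false]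
      simp [hsel]

lemma emitG_split_first (v : V) :
    ∀ (l : List V) (f : V → ℕ), v ∈ l →
      ∃ A B : List (V × U), emitG r wH cv l f =
        A ++ ((gpieces r wH (cv v)).getD (f v) []).map (Prod.mk v) ++ B := by
  intro l
  induction l with
  | nil => intro f h; simp at h
  | cons w l ih =>
    intro f hv
    by_cases hwv : w = v
    · subst hwv
      refine ⟨[], emitG r wH cv l (fun w' => if w' = w then f w + 1 else f w'), ?_⟩
      simp [emitG]
    · have hv' : v ∈ l := by
        rcases List.mem_cons.1 hv with h | h
        · exact absurd h.symm hwv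
        · exact h
      obtain ⟨A, B, hAB⟩ := ih (fun w' => if w' = w then f w + 1 else f w') hv'
      refine ⟨((gpieces r wH (cv w)).getD (f w) []).map (Prod.mk w) ++ A, B, ?_⟩
      simp only [emitG]
      rw [hAB]
      have : (if v = w then f w + 1 else f v) = f v := if_neg (fun h => hwv h.symm)
      rw [this]
      simp [List.append_assoc]

lemma filter_rowsW_copy (pi : List V) (hn : pi.Nodup) (p : V × U → Bool) (v : V)
    (hv : v ∈ pi) (hp : ∀ w, w ≠ v → ∀ u, p (w, u) = false) :
    (rowsW r wH pi).filter p =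
      (((splitR r wH).dropLast).map
        (fun P => (P.filter (fun u => p (v, u))).map (Prod.mk v))).flatten := by
  unfold rowsW
  rw [List.filter_flatten, List.map_map]
  congr 1
  apply List.map_congr_left
  intro P _
  show List.filter p ((pi.map (fun w => P.map (Prod.mk w))).flatten) = _
  rw [List.filter_flatten, List.map_map]
  have hsingle := flatten_map_single (δ := V × U) hn hv
    (fun w => ((P.map (Prod.mk w)).filter p))
    (fun w _ hwv => by
      show List.filter p (List.map (Prod.mk w) P) = []
      rw [List.filter_map]
      have hc : (p ∘ Prod.mk w) = fun _ => false := by funext u; exact hp w hwv u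
      rw [hc, List.filter_false, List.map_nil])
  show ((pi.map (fun w => (P.map (Prod.mk w)).filter p)).flatten) = _
  rw [hsingle]
  show List.filter p (List.map (Prod.mk v) P) = _
  rw [List.filter_map]
  rfl

lemma filter_rowsW_root (pi : List V) (p : V × U → Bool) (sel : V → Bool)
    (hp : ∀ w u, p (w, u) = (sel w && decide (u = r))) (hr : r ∈ wH) :
    (rowsW r wH pi).filter p =
      (List.replicate (splitR r wH).dropLast.length
        ((pi.filter sel).map (fun v => (v, r)))).flatten := by
  unfold rowsW
  rw [List.filter_flatten, List.map_map]
  have hmap : List.map ((List.filter p) ∘ fun P => (pi.map (fun v => P.map (Prod.mk v))).flatten)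
      ((splitR r wH).dropLast)
      = List.map (fun _ => (pi.filter sel).map (fun v => (v, r))) ((splitR r wH).dropLast) := by
    apply List.map_congr_left
    intro P hP
    simp only [Function.comp]
    rw [List.filter_flatten, List.map_map]
    have hcount : P.count r = 1 := count_splitR_dropLast r wH P hP
    apply flatten_map_ite (h := fun v => (v, r)) (sel := sel)
    intro w _
    simp only [Function.comp]
    rw [List.filter_map]
    by_cases hsel : sel w
    · have hf : (p ∘ Prod.mk w) = fun u => decide (u = r) := by
        funext u; simp [hp w u, hsel]
      rw [hf, List.filter_eq, hcount]
      simp [hsel]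
    · have hf : (p ∘ Prod.mk w) = fun _ => false := by
        funext u; simp [hp w u]; intro h; exact absurd h hsel
      rw [hf, List.filter_false]
      simp [hsel]
  rw [hmap, List.map_const']

end Emission

end Stmt19


namespace Stmt19

open List

section Assembly
variable {V : Type*} {U : Type*} [DecidableEq V] [DecidableEq U]
set_option linter.unusedSectionVars false

lemma union_eq_right {l₁ l₂ : List U} (h : ∀ a ∈ l₁, a ∈ l₂) : l₁ ∪ l₂ = l₂ := by
  induction l₁ with
  | nil => rfl
  | cons a l ih =>
    rw [List.cons_union, ih (fun b hb => h b (List.mem_cons_of_mem a hb))]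
    exact List.insert_of_mem (h a (List.mem_cons_self))

lemma flatten_map_filter {γ : Type*} {δ : Type*} (L : List (List γ)) (g : γ → Bool)
    (h : γ → δ) :
    (L.map (fun P => (P.filter g).map h)).flatten = (L.flatten.filter g).map h := by
  induction L with
  | nil => simp
  | cons P L ih => simp [List.filter_append, ih]

variable {H : SimpleGraph U} {wH : List U} {r : U}

/-- The word read by copy `v` in the big word (given `c ≥ 1` occurrences). -/
def copyWord (r : U) (wH : List U) (c : ℕ) : List U :=
  (splitR r wH).dropLast.flatten ++ (gpieces r wH c).flatten

lemma front_btl (r : U) (wH : List U) :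
    (splitR r wH).dropLast.flatten ++ btl r wH = wH := by
  have hne := splitR_ne_nil r wH
  have h1 : (splitR r wH).dropLast ++ [(splitR r wH).getLast hne] = splitR r wH :=
    List.dropLast_append_getLast hne
  have h2 : btl r wH = (splitR r wH).getLast hne := by
    unfold btl
    rw [List.getLast?_eq_getLast hne]
    rfl
  rw [h2]
  have := congrArg List.flatten h1
  rw [List.flatten_append] at this
  simpa using this.trans (flatten_splitR r wH)

lemma copyWord_eq_ge2 (hr : r ∈ wH) {c : ℕ} (hc : 2 ≤ c) :
    copyWord r wH c = wH ++ (List.replicate c wH.dedup).flatten := by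
  unfold copyWord
  rw [flatten_gpieces_ge2 r wH hc]
  have hq : qpre r wH ++ [r] ++ qpost r wH = wH.dedup := by
    rw [q_decomp hr]; simp
  rw [hq, ← List.append_assoc, front_btl]

lemma copyWord_eq_one (hr : r ∈ wH) :
    copyWord r wH 1 = (wH ++ wH.dedup) ++ qpre r wH := by
  unfold copyWord
  rw [flatten_gpieces_one]
  have hq : qpre r wH ++ [r] ++ qpost r wH = wH.dedup := by
    rw [q_decomp hr]; simp
  rw [hq, ← List.append_assoc, ← List.append_assoc, front_btl]

/-- every copy word represents `H`. -/
lemma represents_pow (hRH : Represents H wH) :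
    ∀ k, Represents H (wH ++ (List.replicate k wH.dedup).flatten) ∧
      (wH ++ (List.replicate k wH.dedup).flatten).dedup = wH.dedup := by
  intro k
  induction k with
  | zero =>
    have h0 : wH ++ (List.replicate 0 wH.dedup).flatten = wH := by simp
    rw [h0]; exact ⟨hRH, rfl⟩
  | succ k ih =>
    have hsplit : wH ++ (List.replicate (k+1) wH.dedup).flatten
        = (wH ++ (List.replicate k wH.dedup).flatten) ++ wH.dedup := by
      rw [List.replicate_succ', List.flatten_append]
      simp [List.append_assoc]
    constructor
    · have hrep := represents_append_dedup ih.1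
      rw [ih.2] at hrep
      rw [hsplit]
      exact hrep
    · rw [hsplit, List.dedup_append, List.Nodup.dedup (List.nodup_dedup wH)]
      apply union_eq_right
      intro a ha
      rw [List.mem_dedup.symm, ih.2] at ha
      exact ha

lemma represents_copyWord (hRH : Represents H wH) {c : ℕ} (hc : 1 ≤ c) :
    Represents H (copyWord r wH c) := by
  have hr : r ∈ wH := hRH.1 r
  rcases Nat.lt_or_ge c 2 with h2 | h2
  · have hc1 : c = 1 := by omega
    subst hc1
    rw [copyWord_eq_one hr]
    have h1 := represents_pow hRH 1
    have hw1 : wH ++ (List.replicate 1 wH.dedup).flatten = wH ++ wH.dedup := by simp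
    rw [hw1] at h1
    apply represents_append_prefix_dedup h1.1 (l' := r :: qpost r wH)
    rw [h1.2]
    exact q_decomp hr
  · rw [copyWord_eq_ge2 hr h2]
    exact (represents_pow hRH c).1

/-- the root skeleton represents `G`. -/
lemma represents_rho {G : SimpleGraph V} {wG : List V} (hRG : Represents G wG) :
    ∀ k, Represents G ((List.replicate k (wG.reverse.dedup.reverse)).flatten ++ wG) ∧
      ((List.replicate k (wG.reverse.dedup.reverse)).flatten ++ wG).reverse.dedup
        = wG.reverse.dedup := by
  intro k
  set pi := wG.reverse.dedup.reverse with hpi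
  induction k with
  | zero =>
    have h0 : (List.replicate 0 pi).flatten ++ wG = wG := by simp
    rw [h0]; exact ⟨hRG, rfl⟩
  | succ k ih =>
    have hsplit : (List.replicate (k+1) pi).flatten ++ wG
        = pi ++ ((List.replicate k pi).flatten ++ wG) := by
      rw [List.replicate_succ]
      simp [List.append_assoc]
    constructor
    · rw [hsplit]
      have h := represents_prepend_dedup ih.1
      rw [ih.2] at h
      rw [← hpi] at h
      exact h
    · rw [hsplit, List.reverse_append, List.dedup_append]
      have hnd : pi.reverse.Nodup := by
        rw [hpi, List.reverse_reverse]; exact List.nodup_dedup _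
      rw [List.Nodup.dedup hnd]
      have hpir : pi.reverse = wG.reverse.dedup := by
        rw [hpi, List.reverse_reverse]
      rw [hpir]
      apply union_eq_right
      intro a ha
      rw [List.mem_reverse] at ha
      rw [List.mem_dedup, List.mem_reverse]
      rcases List.mem_append.1 ha with h | h
      · rcases List.mem_flatten.1 h with ⟨L, hL, haL⟩
        rw [List.eq_of_mem_replicate hL] at haL
        rw [hpi, List.mem_reverse, List.mem_dedup, List.mem_reverse] at haL
        exact haL
      · exact h

end Assembly

end Stmt19


namespace Stmt19

open List

section Big
variable {V : Type*} {U : Type*} [DecidableEq V] [DecidableEq U]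
variable {G : SimpleGraph V} {H : SimpleGraph U} {r : U} {wG : List V} {wH : List U}
set_option linter.unusedSectionVars false

lemma range_map_getD_comp {γ : Type*} {δ : Type*} (L : List γ) (d : γ) (F : γ → δ) :
    (List.range L.length).map (fun i => F (L.getD i d)) = L.map F := by
  conv_rhs => rw [← getD_range_map L d]
  rw [List.map_map]
  rfl

lemma range_map_getD_comp' {γ : Type*} {δ : Type*} (L : List γ) (d : γ) (F : γ → δ)
    {n : ℕ} (hn : L.length = n) :
    (List.range n).map (fun i => F (L.getD i d)) = L.map F := by
  subst hn
  exact range_map_getD_comp L d F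

lemma filter_bigW_copy (hRG : Represents G wG) (p : V × U → Bool) (v : V)
    (hp : ∀ w, w ≠ v → ∀ u, p (w, u) = false) :
    (bigW r wG wH).filter p
      = ((copyWord r wH (wG.count v)).filter (fun u => p (v, u))).map (Prod.mk v) := by
  have hnpi : (wG.reverse.dedup.reverse).Nodup := by
    rw [List.nodup_reverse]; exact List.nodup_dedup _
  have hvpi : v ∈ wG.reverse.dedup.reverse := by
    rw [List.mem_reverse, List.mem_dedup, List.mem_reverse]; exact hRG.1 v
  have hc1 : 1 ≤ wG.count v := List.one_le_count_iff.2 (hRG.1 v)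
  unfold bigW
  rw [List.filter_append]
  rw [filter_rowsW_copy r wH _ hnpi p v hvpi hp]
  rw [filter_emitG_copy r wH _ p v hp wG (fun _ => 0)]
  have hzero : ∀ i : ℕ, (fun _ : V => 0) v + i = i := fun i => by simp
  have hstep1 : (List.range (wG.count v)).map
      (fun i => (((gpieces r wH (wG.count v)).getD ((fun _ : V => 0) v + i) []).filter
        (fun u => p (v, u))).map (Prod.mk v))
      = (List.range (wG.count v)).map
      (fun i => (((gpieces r wH (wG.count v)).getD i []).filter
        (fun u => p (v, u))).map (Prod.mk v)) := by
    apply List.map_congr_left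
    intro i _
    rw [hzero i]
  rw [hstep1]
  have hlen : (gpieces r wH (wG.count v)).length = wG.count v := length_gpieces r wH hc1
  rw [range_map_getD_comp' (gpieces r wH (wG.count v)) []
    (fun P => (P.filter (fun u => p (v, u))).map (Prod.mk v)) hlen]
  rw [flatten_map_filter, flatten_map_filter]
  rw [← List.map_append, ← List.filter_append]
  rfl

lemma filter_bigW_root (hRG : Represents G wG) (hrmem : r ∈ wH)
    (p : V × U → Bool) (sel : V → Bool)
    (hp : ∀ w u, p (w, u) = (sel w && decide (u = r))) :
    (bigW r wG wH).filter p
      = (((List.replicate (splitR r wH).dropLast.length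
          (wG.reverse.dedup.reverse)).flatten ++ wG).filter sel).map (fun v => (v, r)) := by
  unfold bigW
  rw [List.filter_append]
  rw [filter_rowsW_root r wH _ p sel hp hrmem]
  rw [filter_emitG_root r wH _ p sel hp hrmem wG (fun _ => 0) (fun w _ => by simp)]
  rw [List.filter_append, List.map_append]
  congr 1
  rw [List.filter_flatten, List.map_replicate, List.map_flatten, List.map_replicate]

lemma count_u_bigP (hRH : Represents H wH) {u : U} (hu : u ≠ r) :
    2 ≤ (bigP r wH).count u := by
  have hrmem : r ∈ wH := hRH.1 r
  have humem : u ∈ wH.dedup := List.mem_dedup.2 (hRH.1 u)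
  rw [q_decomp hrmem] at humem
  rcases List.mem_append.1 humem with h | h
  · -- u ∈ qpre, which occurs twice in bigP
    have h1 : 1 ≤ (qpre r wH).count u := List.one_le_count_iff.2 h
    unfold bigP
    simp only [List.count_append]
    omega
  · rcases List.mem_cons.1 h with h' | h'
    · exact absurd h' hu
    · -- u ∈ qpost hence u ∈ btl
      have h1 : 1 ≤ (qpost r wH).count u := List.one_le_count_iff.2 h'
      have h2 : u ∈ btl r wH := qpost_subset_getLast r wH hrmem u h'
      have h3 : 1 ≤ (btl r wH).count u := List.one_le_count_iff.2 h2
      unfold bigP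
      simp only [List.count_append]
      omega

lemma not_alternates_cross (hRG : Represents G wG) (hRH : Represents H wH)
    {x y : V} {u u' : U} (hxy : x ≠ y) (hu : u ≠ r) :
    ¬ Alternates (x, u) (y, u') (bigW r wG wH) := by
  unfold Alternates
  intro halt
  obtain ⟨A, B, hAB⟩ :=
    emitG_split_first r wH (fun v => wG.count v) x wG (fun _ => 0) (hRG.1 x)
  set p : V × U → Bool := fun z => decide (z = (x, u) ∨ z = (y, u')) with hpdef
  have hW : bigW r wG wH
      = (rowsW r wH (wG.reverse.dedup.reverse) ++ A)
        ++ ((gpieces r wH (wG.count x)).getD 0 []).map (Prod.mk x) ++ B := by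
    unfold bigW
    rw [hAB]
    simp [List.append_assoc]
  have hmid : (((gpieces r wH (wG.count x)).getD 0 []).map (Prod.mk x)).filter p
      = List.replicate ((bigP r wH).count u) (x, u) := by
    rw [gpieces_getD_zero, List.filter_map]
    have hfun : (p ∘ Prod.mk x) = fun z => decide (z = u) := by
      funext z
      simp [hpdef, Prod.ext_iff, hxy]
    rw [hfun, List.filter_eq, List.map_replicate]
  have hk : 2 ≤ (bigP r wH).count u := count_u_bigP hRH hu
  rw [hW, List.filter_append, List.filter_append, hmid] at halt
  have hinfix : [(x, u), (x, u)] <:+: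
      ((rowsW r wH (wG.reverse.dedup.reverse) ++ A).filter p
        ++ List.replicate ((bigP r wH).count u) (x, u) ++ B.filter p) := by
    obtain ⟨k, hkk⟩ : ∃ k, (bigP r wH).count u = k + 2 := ⟨(bigP r wH).count u - 2, by omega⟩
    refine ⟨(rowsW r wH (wG.reverse.dedup.reverse) ++ A).filter p,
      List.replicate k (x, u) ++ B.filter p, ?_⟩
    rw [hkk]
    have : List.replicate (k + 2) (x, u) = (x, u) :: (x, u) :: List.replicate k (x, u) := by
      rw [show k + 2 = (k+1)+1 from rfl, List.replicate_succ, List.replicate_succ]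
    rw [this]
    simp [List.append_assoc]
  have hchain := halt.infix hinfix
  unfold List.Chain' at hchain
  rw [List.isChain_cons_cons] at hchain
  exact hchain.1 rfl

lemma alternates_comm {γ : Type*} [DecidableEq γ] (a b : γ) (w : List γ) :
    Alternates a b w ↔ Alternates b a w := by
  unfold Alternates
  have h : w.filter (fun z => decide (z = a ∨ z = b))
      = w.filter (fun z => decide (z = b ∨ z = a)) := by
    apply List.filter_congr
    intro x _
    exact decide_eq_decide.2 or_comm
  rw [h]

lemma chain'_ne_map_mk (v : V) (l : List U) :
    (l.map (Prod.mk v)).Chain' (· ≠ ·) ↔ l.Chain' (· ≠ ·) := by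
  unfold List.Chain'
  rw [List.isChain_map]
  constructor
  · intro h
    exact h.imp (fun a b hab => by intro he; exact hab (by rw [he]))
  · intro h
    exact h.imp (fun a b hab => by
      intro he
      exact hab (by injection he with h1 h2))

lemma chain'_ne_map_root (l : List V) :
    ((l.map (fun v => (v, r))).Chain' (· ≠ ·)) ↔ l.Chain' (· ≠ ·) := by
  unfold List.Chain'
  rw [List.isChain_map]
  constructor
  · intro h
    exact h.imp (fun a b hab => by intro he; exact hab (by rw [he]))
  · intro h
    exact h.imp (fun a b hab => by
      intro he
      exact hab (by injection he with h1 h2))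

lemma alternates_copy_iff (hRG : Represents G wG) (v : V) {a b : U} (hab : a ≠ b) :
    Alternates (v, a) (v, b) (bigW r wG wH)
      ↔ Alternates a b (copyWord r wH (wG.count v)) := by
  unfold Alternates
  rw [filter_bigW_copy hRG _ v (fun w hwv u => by
    simp only [decide_eq_false_iff_not]
    rintro (h | h) <;> exact hwv (congrArg Prod.fst h))]
  rw [chain'_ne_map_mk]
  have : (copyWord r wH (wG.count v)).filter
      (fun u => decide ((v, u) = (v, a) ∨ (v, u) = (v, b)))
      = (copyWord r wH (wG.count v)).filter (fun u => decide (u = a ∨ u = b)) := by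
    apply List.filter_congr
    intro u _
    simp [Prod.ext_iff]
  rw [this]

lemma alternates_root_iff (hRG : Represents G wG) (hrmem : r ∈ wH) {x y : V} (hxy : x ≠ y) :
    Alternates (x, r) (y, r) (bigW r wG wH)
      ↔ Alternates x y ((List.replicate (splitR r wH).dropLast.length
          (wG.reverse.dedup.reverse)).flatten ++ wG) := by
  unfold Alternates
  rw [filter_bigW_root hRG hrmem _ (fun w => decide (w = x ∨ w = y)) (fun w u => by
    simp only [Bool.and_eq_true, decide_eq_true_eq, decide_eq_decide, Prod.ext_iff,
      ← Bool.decide_and, decide_eq_decide]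
    constructor
    · rintro (⟨h1, h2⟩ | ⟨h1, h2⟩)
      · exact ⟨Or.inl h1, h2⟩
      · exact ⟨Or.inr h1, h2⟩
    · rintro ⟨h1 | h1, h2⟩
      · exact Or.inl ⟨h1, h2⟩
      · exact Or.inr ⟨h1, h2⟩)]
  rw [chain'_ne_map_root]

lemma mem_bigW (hRG : Represents G wG) (hRH : Represents H wH) (z : V × U) :
    z ∈ bigW r wG wH := by
  obtain ⟨v, u⟩ := z
  have hfil := filter_bigW_copy (r := r) (wH := wH) hRG
    (fun z => decide (z.1 = v)) v (fun w hwv u' => by simp [hwv])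
  have humem : u ∈ copyWord r wH (wG.count v) := by
    unfold copyWord
    have : u ∈ wH := hRH.1 u
    rw [← front_btl r wH] at this
    rcases List.mem_append.1 this with h | h
    · exact List.mem_append.2 (Or.inl h)
    · -- u ∈ btl ⊆ bigP ⊆ gpieces flatten
      apply List.mem_append.2
      right
      have hbig : u ∈ bigP r wH := by
        unfold bigP
        simp only [List.mem_append]
        left; left; left; left; exact h
      rcases Nat.lt_or_ge (wG.count v) 2 with h2 | h2
      · unfold gpieces
        rw [if_pos (by omega)]
        simpa using hbig
      · unfold gpieces
        rw [if_neg (by omega)]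
        rw [List.flatten_cons]
        exact List.mem_append.2 (Or.inl hbig)
  have : (v, u) ∈ ((copyWord r wH (wG.count v)).filter
      (fun u => decide ((v, u).1 = v))).map (Prod.mk v) := by
    apply List.mem_map.2
    refine ⟨u, ?_, rfl⟩
    apply List.mem_filter.2
    exact ⟨humem, by simp⟩
  rw [← hfil] at this
  exact List.mem_of_mem_filter this

end Big

end Stmt19


namespace Stmt19

open List

section Length
variable {V : Type*} {U : Type*} [Fintype V] [DecidableEq V] [DecidableEq U]
set_option linter.unusedSectionVars false

lemma length_partition (l : List (V × U)) :
    l.length = ∑ v : V, (l.filter (fun z => decide (z.1 = v))).length := by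
  induction l with
  | nil => simp
  | cons z l ih =>
    have hstep : ∀ v : V, ((z :: l).filter (fun z' => decide (z'.1 = v))).length
        = (if z.1 = v then 1 else 0) + (l.filter (fun z' => decide (z'.1 = v))).length := by
      intro v
      rw [List.filter_cons]
      by_cases h : z.1 = v
      · rw [if_pos (by simp [h]), if_pos h]
        rw [List.length_cons]
        omega
      · rw [if_neg (by simp [h]), if_neg h]
        omega
    calc (z :: l).length = 1 + l.length := by rw [List.length_cons]; omega
    _ = (∑ v : V, if z.1 = v then 1 else 0)
        + ∑ v : V, (l.filter (fun z' => decide (z'.1 = v))).length := by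
        rw [ih, Finset.sum_ite_eq Finset.univ z.1 (fun _ => 1), if_pos (Finset.mem_univ _)]
    _ = ∑ v : V, ((if z.1 = v then 1 else 0)
        + (l.filter (fun z' => decide (z'.1 = v))).length) := by
        rw [Finset.sum_add_distrib]
    _ = ∑ v : V, ((z :: l).filter (fun z' => decide (z'.1 = v))).length := by
        exact (Finset.sum_congr rfl (fun v _ => (hstep v).symm))

lemma sum_count (wG : List V) : ∑ v : V, wG.count v = wG.length := by
  induction wG with
  | nil => simp
  | cons a l ih =>
    have hstep : ∀ v : V, (a :: l).count v = (if a = v then 1 else 0) + l.count v := by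
      intro v
      rw [List.count_cons]
      by_cases h : v = a
      · rw [if_pos (beq_iff_eq.mpr h.symm), if_pos h.symm]
        omega
      · rw [if_neg (by simp; exact fun hh => h hh.symm),
          if_neg (fun hh : a = v => h hh.symm)]
        omega
    calc ∑ v : V, (a :: l).count v
        = ∑ v : V, ((if a = v then 1 else 0) + l.count v) :=
          Finset.sum_congr rfl (fun v _ => hstep v)
      _ = (∑ v : V, if a = v then 1 else 0) + ∑ v : V, l.count v := by
          rw [Finset.sum_add_distrib]
      _ = 1 + l.length := by
          rw [ih, Finset.sum_ite_eq Finset.univ a (fun _ => 1), if_pos (Finset.mem_univ _)]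
      _ = (a :: l).length := by rw [List.length_cons]; omega

lemma length_flatten_replicate {γ : Type*} (c : ℕ) (q : List γ) :
    ((List.replicate c q).flatten).length = c * q.length := by
  induction c with
  | zero => simp
  | succ c ih =>
    rw [List.replicate_succ, List.flatten_cons, List.length_append, ih]
    ring

lemma length_copyWord {r : U} {wH : List U} (hr : r ∈ wH) {c : ℕ} (hc : 1 ≤ c) :
    (copyWord r wH c).length
      = wH.length + c * wH.dedup.length + (if c = 1 then (qpre r wH).length else 0) := by
  rcases Nat.lt_or_ge c 2 with h2 | h2
  · have hc1 : c = 1 := by omega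
    subst hc1
    rw [copyWord_eq_one hr, if_pos rfl, List.length_append, List.length_append]
    omega
  · have hcne : c ≠ 1 := by omega
    rw [copyWord_eq_ge2 hr h2, if_neg hcne]
    rw [List.length_append, length_flatten_replicate, Nat.add_zero]

end Length

section Clique
variable {V : Type*} [Fintype V] [DecidableEq V]
set_option linter.unusedSectionVars false

lemma length_filter_pair {γ : Type*} [DecidableEq γ] (l : List γ) {a b : γ} (hab : a ≠ b) :
    (l.filter (fun z => decide (z = a ∨ z = b))).length = l.count a + l.count b := by
  induction l with
  | nil => simp
  | cons c l ih =>
    rw [List.filter_cons, List.count_cons, List.count_cons]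
    by_cases hca : c = a
    · rw [if_pos (by simp [hca]), List.length_cons, ih]
      have e1 : (c == a) = true := beq_iff_eq.mpr hca
      have e2 : (c == b) = false := by
        apply beq_eq_false_iff_ne.mpr
        intro h
        exact hab (hca.symm.trans h)
      rw [e1, e2, if_pos rfl]
      simp only [Bool.false_eq_true, if_false]
      omega
    · by_cases hcb : c = b
      · rw [if_pos (by simp [hcb]), List.length_cons, ih]
        have e1 : (c == a) = false := by
          apply beq_eq_false_iff_ne.mpr
          intro h
          exact hca h
        have e2 : (c == b) = true := beq_iff_eq.mpr hcb
        rw [e1, e2, if_pos rfl]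
        simp only [Bool.false_eq_true, if_false]
        omega
      · rw [if_neg (by simp [hca, hcb]), ih]
        have e1 : (c == a) = false :=
          beq_eq_false_iff_ne.mpr hca
        have e2 : (c == b) = false :=
          beq_eq_false_iff_ne.mpr hcb
        rw [e1, e2]
        simp only [Bool.false_eq_true, if_false]
        omega

lemma singles_card_le_cliqueNum {G : SimpleGraph V} {wG : List V} (hRG : Represents G wG) :
    (Finset.univ.filter (fun v => wG.count v = 1)).card ≤ G.cliqueNum := by
  set S := Finset.univ.filter (fun v => wG.count v = 1) with hS
  have hclique : G.IsNClique S.card S := by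
    rw [SimpleGraph.isNClique_iff]
    refine ⟨?_, rfl⟩
    intro a ha b hb hab
    have hca : wG.count a = 1 := (Finset.mem_filter.1 (Finset.mem_coe.1 ha)).2
    have hcb : wG.count b = 1 := (Finset.mem_filter.1 (Finset.mem_coe.1 hb)).2
    rw [hRG.2 a b hab]
    unfold Alternates
    have hfl : (wG.filter (fun z => decide (z = a ∨ z = b))).length = 2 := by
      rw [length_filter_pair wG hab, hca, hcb]
    obtain ⟨p, q, hpq⟩ := List.length_eq_two.1 hfl
    have hamem : a ∈ wG.filter (fun z => decide (z = a ∨ z = b)) :=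
      List.mem_filter.2 ⟨hRG.1 a, by simp⟩
    have hbmem : b ∈ wG.filter (fun z => decide (z = a ∨ z = b)) :=
      List.mem_filter.2 ⟨hRG.1 b, by simp⟩
    rw [hpq] at hamem hbmem ⊢
    simp only [List.mem_cons, List.mem_singleton, List.not_mem_nil, or_false] at hamem hbmem
    have hpq' : p ≠ q := by
      rcases hamem with h1 | h1 <;> rcases hbmem with h2 | h2
      · exact absurd (h1.trans h2.symm) hab
      · intro h; exact hab (h1.trans (h.trans h2.symm))
      · intro h; exact hab (h1.trans (h.symm.trans h2.symm))
      · exact absurd (h1.trans h2.symm) hab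
    simp [List.Chain', List.isChain_cons_cons, hpq']
  have hmem : S.card ∈ {n | ∃ s, G.IsNClique n s} := ⟨S, hclique⟩
  have hbdd : BddAbove {n | ∃ s, G.IsNClique n s} := by
    refine ⟨Fintype.card V, ?_⟩
    rintro n ⟨s, hs⟩
    rw [← hs.2]
    exact le_trans (Finset.card_le_univ s) (le_of_eq Finset.card_univ)
  exact le_csSup hbdd hmem

end Clique

end Stmt19


theorem stmt19 {U : Type*} [Fintype V] [Fintype U] [DecidableEq V] [DecidableEq U]
    (G : SimpleGraph V) (H : SimpleGraph U) (r : U)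
    (hG : WordRepresentable G) (hH : WordRepresentable H) :
    reprLen (rootedProd G H r) ≤ Fintype.card U * reprLen G +
      Fintype.card V * reprLen H + (Fintype.card U - 1) * G.cliqueNum := by
  obtain ⟨wG, hRG, hlG⟩ : ∃ w : List V, Represents G w ∧ w.length = reprLen G := by
    obtain ⟨w0, hw0⟩ := hG
    have hne : {n | ∃ w : List V, Represents G w ∧ w.length = n}.Nonempty :=
      ⟨w0.length, ⟨w0, hw0, rfl⟩⟩
    exact Nat.sInf_mem hne
  obtain ⟨wH, hRH, hlH⟩ : ∃ w : List U, Represents H w ∧ w.length = reprLen H := by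
    obtain ⟨w0, hw0⟩ := hH
    have hne : {n | ∃ w : List U, Represents H w ∧ w.length = n}.Nonempty :=
      ⟨w0.length, ⟨w0, hw0, rfl⟩⟩
    exact Nat.sInf_mem hne
  have hrmem : r ∈ wH := hRH.1 r
  have hAdj : ∀ p q : V × U, (rootedProd G H r).Adj p q ↔
      ((p.1 = q.1 ∧ H.Adj p.2 q.2) ∨ (p.2 = r ∧ q.2 = r ∧ G.Adj p.1 q.1)) :=
    fun p q => Iff.rfl
  have hRepW : Represents (rootedProd G H r) (Stmt19.bigW r wG wH) := by
    constructor
    · exact fun z => Stmt19.mem_bigW hRG hRH z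
    · rintro ⟨x, u⟩ ⟨y, u'⟩ hne
      by_cases hxy : x = y
      · subst hxy
        have huu : u ≠ u' := fun h => hne (by rw [h])
        rw [Stmt19.alternates_copy_iff hRG x huu]
        have hrep := Stmt19.represents_copyWord (r := r) hRH
          (List.one_le_count_iff.2 (hRG.1 x))
        rw [hAdj, ← hrep.2 u u' huu]
        constructor
        · rintro (⟨_, h⟩ | ⟨_, _, h⟩)
          · exact h
          · exact absurd h (G.loopless.irrefl x)
        · intro h
          exact Or.inl ⟨rfl, h⟩
      · by_cases hroot : u = r ∧ u' = r
        · obtain ⟨h1, h2⟩ := hroot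
          rw [h1, h2]
          rw [Stmt19.alternates_root_iff hRG hrmem hxy, hAdj]
          have hrho := Stmt19.represents_rho hRG ((Stmt19.splitR r wH).dropLast.length)
          rw [← hrho.1.2 x y hxy]
          constructor
          · rintro (⟨h, _⟩ | ⟨_, _, h⟩)
            · exact absurd h hxy
            · exact h
          · intro h
            exact Or.inr ⟨rfl, rfl, h⟩
        · apply iff_of_false
          · rw [hAdj]
            rintro (⟨h, _⟩ | ⟨h1, h2, _⟩)
            · exact hxy h
            · exact hroot ⟨h1, h2⟩
          · by_cases hu : u = r
            · rw [hu]
              have hu' : u' ≠ r := fun h => hroot ⟨hu, h⟩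
              rw [Stmt19.alternates_comm]
              exact Stmt19.not_alternates_cross hRG hRH (Ne.symm hxy) hu'
            · exact Stmt19.not_alternates_cross hRG hRH hxy hu
  have hq : wH.dedup.length = Fintype.card U := by
    have hnod := List.nodup_dedup wH
    have huniv : wH.dedup.toFinset = Finset.univ := by
      ext u
      simp only [List.mem_toFinset, List.mem_dedup, Finset.mem_univ, iff_true]
      exact hRH.1 u
    rw [← List.toFinset_card_of_nodup hnod, huniv, Finset.card_univ]
  have hqpre : (Stmt19.qpre r wH).length ≤ Fintype.card U - 1 := by
    have hd := congrArg List.length (Stmt19.q_decomp hrmem)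
    rw [List.length_append, List.length_cons, hq] at hd
    omega
  have hWlen : (Stmt19.bigW r wG wH).length
      = ∑ v : V, (Stmt19.copyWord r wH (wG.count v)).length := by
    rw [Stmt19.length_partition]
    apply Finset.sum_congr rfl
    intro v _
    rw [Stmt19.filter_bigW_copy hRG (fun z => decide (z.1 = v)) v
      (fun w hwv u => by simp [hwv])]
    rw [List.length_map]
    congr 1
    apply List.filter_eq_self.mpr
    intro u _
    simp
  have hsum : ∑ v : V, (Stmt19.copyWord r wH (wG.count v)).length
      = Fintype.card V * wH.length + wH.dedup.length * wG.length
        + (Finset.univ.filter (fun v => wG.count v = 1)).card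
          * (Stmt19.qpre r wH).length := by
    calc ∑ v : V, (Stmt19.copyWord r wH (wG.count v)).length
        = ∑ v : V, (wH.length + wG.count v * wH.dedup.length
          + (if wG.count v = 1 then (Stmt19.qpre r wH).length else 0)) :=
          Finset.sum_congr rfl (fun v _ =>
            Stmt19.length_copyWord hrmem (List.one_le_count_iff.2 (hRG.1 v)))
      _ = ((∑ _v : V, wH.length) + (∑ v : V, wG.count v * wH.dedup.length))
          + ∑ v : V, (if wG.count v = 1 then (Stmt19.qpre r wH).length else 0) := by
          rw [Finset.sum_add_distrib, Finset.sum_add_distrib]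
      _ = Fintype.card V * wH.length + wH.dedup.length * wG.length
          + (Finset.univ.filter (fun v => wG.count v = 1)).card
            * (Stmt19.qpre r wH).length := by
          congr 1
          · congr 1
            · rw [Finset.sum_const, Finset.card_univ, smul_eq_mul]
            · rw [← Finset.sum_mul, Stmt19.sum_count, Nat.mul_comm]
          · rw [← Finset.sum_filter, Finset.sum_const, smul_eq_mul]
  have hclique := Stmt19.singles_card_le_cliqueNum hRG
  have hfinal : (Stmt19.bigW r wG wH).length ≤ Fintype.card U * reprLen G +
      Fintype.card V * reprLen H + (Fintype.card U - 1) * G.cliqueNum := by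
    rw [hWlen, hsum, hq, hlG, hlH]
    have hC : (Finset.univ.filter (fun v => wG.count v = 1)).card
        * (Stmt19.qpre r wH).length ≤ (Fintype.card U - 1) * G.cliqueNum := by
      rw [Nat.mul_comm]
      exact Nat.mul_le_mul hqpre hclique
    exact Nat.add_le_add (le_of_eq (Nat.add_comm _ _)) hC
  exact le_trans (Nat.sInf_le ⟨Stmt19.bigW r wG wH, hRepW, rfl⟩) hfinal
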